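/- With T, P, Q as in the norm-independent Sign-ALSH scheme, ‖P(Q(T(q)))‖ = \sqrt{m/4 + ‖T(q)‖^{2^{m+1}}} and ‖Q(P(T(x)))‖ = \sqrt{m/4 + ‖T(x)‖^{2^{m+1}}}. -/

import Mathlib

open Real RealInnerProductSpace

/-- Sign-ALSH preprocessing transformation (generic dimension): append the `m`
scalars `1/2 - ‖v‖^(2^i)`, `i = 1, …, m`. -/
noncomputable def signALSH_P (m : ℕ) {n : ℕ} (v : EuclideanSpace ℝ (Fin n)) :
    EuclideanSpace ℝ (Fin (n + m)) :=
  WithLp.toLp 2 fun j => if h : (j : ℕ) < n then v ⟨j, h⟩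
    else 1 / 2 - ‖v‖ ^ (2 ^ ((j : ℕ) - n + 1))

/-- Sign-ALSH query transformation (generic dimension): append `m` zeros. -/
noncomputable def signALSH_Q (m : ℕ) {n : ℕ} (v : EuclideanSpace ℝ (Fin n)) :
    EuclideanSpace ℝ (Fin (n + m)) :=
  WithLp.toLp 2 fun j => if h : (j : ℕ) < n then v ⟨j, h⟩ else 0

/-- Scaling transformation `T(v) = (U/M) v`. -/
noncomputable def signALSH_T (U M : ℝ) {n : ℕ} (v : EuclideanSpace ℝ (Fin n)) :
    EuclideanSpace ℝ (Fin n) := (U / M) • v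

lemma Q_norm (m : ℕ) {n : ℕ} (v : EuclideanSpace ℝ (Fin n)) :
    ‖signALSH_Q m v‖ = ‖v‖ := by
  rw [EuclideanSpace.norm_eq, EuclideanSpace.norm_eq, Fin.sum_univ_add]
  congr 1
  have h1 : ∀ j : Fin n, ‖signALSH_Q m v (Fin.castAdd m j)‖ ^ 2 = ‖v j‖ ^ 2 := by
    intro j
    simp [signALSH_Q, Fin.castAdd, j.isLt]
  have h2 : ∀ j : Fin m, ‖signALSH_Q m v (Fin.natAdd n j)‖ ^ 2 = 0 := by
    intro j
    simp [signALSH_Q, Fin.natAdd]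
  rw [Finset.sum_congr rfl (fun j _ => h1 j), Finset.sum_congr rfl (fun j _ => h2 j)]
  simp

lemma telescope (a : ℝ) (m : ℕ) :
    ∑ i ∈ Finset.range m, ((1:ℝ)/2 - a ^ (2 ^ (i+1))) ^ 2
      = m / 4 - a ^ 2 + a ^ (2 ^ (m+1)) := by
  induction m with
  | zero => simp
  | succ k ih =>
      have hb : (a ^ (2 ^ (k+1))) ^ 2 = a ^ (2 ^ (k+2)) := by
        rw [← pow_mul, ← pow_succ]
      rw [Finset.sum_range_succ, ih,
        show ((1:ℝ)/2 - a ^ (2 ^ (k+1))) ^ 2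
          = 1/4 - a ^ (2 ^ (k+1)) + (a ^ (2 ^ (k+1))) ^ 2 from by ring, hb]
      push_cast
      ring

lemma P_norm_sq (m : ℕ) {n : ℕ} (v : EuclideanSpace ℝ (Fin n)) :
    ‖signALSH_P m v‖ ^ 2 = m / 4 + ‖v‖ ^ (2 ^ (m + 1)) := by
  rw [EuclideanSpace.norm_eq, Real.sq_sqrt (by positivity), Fin.sum_univ_add]
  have h1 : ∀ j : Fin n, ‖signALSH_P m v (Fin.castAdd m j)‖ ^ 2 = ‖v j‖ ^ 2 := by
    intro j; simp [signALSH_P, Fin.castAdd, j.isLt]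
  have h2 : ∀ j : Fin m, ‖signALSH_P m v (Fin.natAdd n j)‖ ^ 2
      = ((1:ℝ)/2 - ‖v‖ ^ (2 ^ ((j:ℕ)+1))) ^ 2 := by
    intro j
    simp only [signALSH_P, PiLp.toLp_apply, Fin.natAdd, Real.norm_eq_abs, sq_abs]
    rw [dif_neg (by simp), Nat.add_sub_cancel_left]
  rw [Finset.sum_congr rfl (fun j _ => h1 j), Finset.sum_congr rfl (fun j _ => h2 j)]
  have hv : ∑ j : Fin n, ‖v j‖ ^ 2 = ‖v‖ ^ 2 := by
    rw [EuclideanSpace.norm_eq, Real.sq_sqrt (by positivity)]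
  rw [hv, Fin.sum_univ_eq_sum_range (fun i => ((1:ℝ)/2 - ‖v‖ ^ (2 ^ (i+1))) ^ 2),
    telescope]
  ring

/-- `‖P(Q(T(q)))‖ = √(m/4 + ‖T(q)‖^(2^(m+1)))` and
`‖Q(P(T(x)))‖ = √(m/4 + ‖T(x)‖^(2^(m+1)))`. -/
theorem signALSH_norm_independent_norms (m D : ℕ) (hm : 1 ≤ m)
    (U M : ℝ) (hU0 : 0 < U) (hU1 : U < 1) (hM : 0 < M)
    (q x : EuclideanSpace ℝ (Fin D)) :
    ‖signALSH_P m (signALSH_Q m (signALSH_T U M q))‖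
      = Real.sqrt (m / 4 + ‖signALSH_T U M q‖ ^ (2 ^ (m + 1))) ∧
    ‖signALSH_Q m (signALSH_P m (signALSH_T U M x))‖
      = Real.sqrt (m / 4 + ‖signALSH_T U M x‖ ^ (2 ^ (m + 1))) := by
  constructor
  · have h := P_norm_sq m (signALSH_Q m (signALSH_T U M q))
    rw [Q_norm] at h
    rw [← Real.sqrt_sq (norm_nonneg _), h]
  · rw [Q_norm]
    have h := P_norm_sq m (signALSH_T U M x)
    rw [← Real.sqrt_sq (norm_nonneg _), h]
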